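/- Given an integer r ≥ 3, natural numbers n_1, ..., n_r, and nonzero real numbers σ_2, ..., σ_{r-1}, set s_* = 2(n_1 + n_r + 2) and define 𝓘(κ) = ∫_0^{s_*} e^{-κy} y^{n_1} (y - s_*)^{n_r} (y - 2n_1 - 2) ∏_{i=2}^{r-1} (y + σ_i)^{n_i} dy. Then κ^{n_1+1} · 𝓘(κ) tends to n_1! · (-s_*)^{n_r} · (-(2n_1+2)) · ∏_{i=2}^{r-1} σ_i^{n_i} as κ → +∞. In particular, for all sufficiently large κ > 0, the sign of 𝓘(κ) equals the sign of (-1)^{n_r+1} · ∏_{i=2}^{r-1} σ_i^{n_i}. -/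

import Mathlib

open MeasureTheory Real Filter Set intervalIntegral

lemma aux_int_conv (m : ℕ) :
    IntegrableOn (fun x : ℝ => Real.exp (-x) * x ^ m) (Ioi 0) := by
  have h := Real.GammaIntegral_convergent (s := (m : ℝ) + 1) (by positivity)
  refine h.congr_fun (fun x hx => ?_) measurableSet_Ioi
  simp only [add_sub_cancel_right, Real.rpow_natCast]

lemma aux_gamma (m : ℕ) :
    ∫ x in Ioi (0:ℝ), Real.exp (-x) * x ^ m = (m.factorial : ℝ) := by
  have h1 : Real.Gamma ((m : ℝ) + 1) = ∫ x in Ioi (0:ℝ), Real.exp (-x) * x ^ ((m:ℝ) + 1 - 1) :=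
    Real.Gamma_eq_integral (by positivity)
  rw [Real.Gamma_nat_eq_factorial] at h1
  rw [h1]
  congr 1
  ext x
  rw [add_sub_cancel_right, Real.rpow_natCast]

-- substitution: κ^(m+1) * ∫_0^s e^{-κy} y^m dy = ∫_0^{κs} e^{-u} u^m du
lemma aux_subst (m : ℕ) (s κ : ℝ) :
    κ ^ (m + 1) * ∫ y in (0:ℝ)..s, Real.exp (-κ * y) * y ^ m
      = ∫ u in (0:ℝ)..(κ * s), Real.exp (-u) * u ^ m := by
  have h := intervalIntegral.smul_integral_comp_mul_left
    (f := fun u : ℝ => Real.exp (-u) * u ^ m) (a := (0:ℝ)) (b := s) κ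
  rw [mul_zero] at h
  rw [← h]
  simp only [smul_eq_mul, ← intervalIntegral.integral_const_mul]
  congr 1
  ext y
  rw [mul_pow, neg_mul, pow_succ]
  ring

lemma aux_tendsto (m : ℕ) (s : ℝ) (hs : 0 < s) :
    Tendsto (fun κ : ℝ => κ ^ (m + 1) * ∫ y in (0:ℝ)..s, Real.exp (-κ * y) * y ^ m)
      atTop (nhds (m.factorial : ℝ)) := by
  have h := MeasureTheory.intervalIntegral_tendsto_integral_Ioi (a := (0:ℝ))
    (f := fun x => Real.exp (-x) * x ^ m) (b := fun κ : ℝ => κ * s)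
    (aux_int_conv m) (Tendsto.atTop_mul_const hs tendsto_id)
  rw [aux_gamma m] at h
  refine h.congr (fun κ => ?_)
  exact (aux_subst m s κ).symm

lemma aux_bound (m : ℕ) (s κ : ℝ) (hs : 0 ≤ s) (hκ : 0 < κ) :
    ∫ y in (0:ℝ)..s, Real.exp (-κ * y) * y ^ m ≤ (m.factorial : ℝ) / κ ^ (m + 1) := by
  rw [le_div_iff₀' (by positivity), aux_subst m s κ]
  rw [← aux_gamma m]
  rw [intervalIntegral.integral_of_le (by positivity)]
  refine MeasureTheory.setIntegral_mono_set (aux_int_conv m) ?_ ?_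
  · filter_upwards [MeasureTheory.ae_restrict_mem measurableSet_Ioi] with x hx
    have : (0:ℝ) < x := hx
    positivity
  · exact HasSubset.Subset.eventuallyLE Ioc_subset_Ioi_self

lemma aux_nonneg (m : ℕ) (s κ : ℝ) (hs : 0 ≤ s) :
    0 ≤ ∫ y in (0:ℝ)..s, Real.exp (-κ * y) * y ^ m := by
  apply intervalIntegral.integral_nonneg hs
  intro x hx
  have := hx.1
  positivity

lemma aux_lip (g : ℝ → ℝ) (hg : ContDiff ℝ 1 g) (s : ℝ) (hs : 0 ≤ s) :
    ∃ C : ℝ, 0 ≤ C ∧ ∀ y ∈ Icc (0:ℝ) s, |g y - g 0| ≤ C * y := by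
  have hd : Continuous (deriv g) := hg.continuous_deriv le_rfl
  obtain ⟨C, hC⟩ := (isCompact_Icc (a := (0:ℝ)) (b := s)).exists_bound_of_continuousOn
    hd.continuousOn
  refine ⟨max C 0, le_max_right _ _, fun y hy => ?_⟩
  have := norm_image_sub_le_of_norm_deriv_le_segment' (f := g) (a := (0:ℝ)) (b := s)
    (f' := deriv g) (C := max C 0)
    (fun x hx => (hg.differentiable one_ne_zero x).hasDerivAt.hasDerivWithinAt)
    (fun x hx => le_trans (hC x (Ico_subset_Icc_self hx)) (le_max_left _ _)) y hy
  simpa using this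

lemma aux_err (m : ℕ) (s : ℝ) (hs : 0 < s) (g : ℝ → ℝ) (hg : ContDiff ℝ 1 g) :
    Tendsto (fun κ : ℝ => κ ^ (m + 1) *
        ∫ y in (0:ℝ)..s, Real.exp (-κ * y) * y ^ m * (g y - g 0))
      atTop (nhds 0) := by
  obtain ⟨C, hC0, hC⟩ := aux_lip g hg s hs.le
  apply squeeze_zero_norm' (a := fun κ : ℝ => C * (m+1).factorial / κ)
  · filter_upwards [eventually_gt_atTop (0:ℝ)] with κ hκ
    have hint1 : IntervalIntegrable (fun y => |Real.exp (-κ * y) * y ^ m * (g y - g 0)|)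
        MeasureTheory.volume 0 s := by
      apply Continuous.intervalIntegrable
      have := hg.continuous
      fun_prop
    have hint2 : IntervalIntegrable (fun y => C * (Real.exp (-κ * y) * y ^ (m+1)))
        MeasureTheory.volume 0 s := by
      apply Continuous.intervalIntegrable; fun_prop
    have h1 : |∫ y in (0:ℝ)..s, Real.exp (-κ * y) * y ^ m * (g y - g 0)|
        ≤ ∫ y in (0:ℝ)..s, C * (Real.exp (-κ * y) * y ^ (m+1)) := by
      refine le_trans (intervalIntegral.abs_integral_le_integral_abs hs.le) ?_
      refine intervalIntegral.integral_mono_on hs.le hint1 hint2 (fun y hy => ?_) 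
      rw [abs_mul, abs_mul]
      have hy0 : 0 ≤ y := hy.1
      have h2 := hC y hy
      calc |Real.exp (-κ * y)| * |y ^ m| * |g y - g 0|
          ≤ Real.exp (-κ * y) * y ^ m * (C * y) := by
            rw [abs_of_nonneg (Real.exp_pos _).le, abs_of_nonneg (by positivity)]
            exact mul_le_mul_of_nonneg_left h2 (by positivity)
        _ = C * (Real.exp (-κ * y) * y ^ (m+1)) := by ring
    have h3 : ∫ y in (0:ℝ)..s, C * (Real.exp (-κ * y) * y ^ (m+1))
        ≤ C * ((m+1).factorial / κ ^ (m+2)) := by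
      rw [intervalIntegral.integral_const_mul]
      exact mul_le_mul_of_nonneg_left (aux_bound (m+1) s κ hs.le hκ) hC0
    rw [norm_mul, Real.norm_eq_abs, Real.norm_eq_abs,
      abs_of_nonneg (by positivity : (0:ℝ) ≤ κ ^ (m+1))]
    calc κ ^ (m+1) * |∫ y in (0:ℝ)..s, Real.exp (-κ * y) * y ^ m * (g y - g 0)|
        ≤ κ ^ (m+1) * (C * ((m+1).factorial / κ ^ (m+2))) := by
          exact mul_le_mul_of_nonneg_left (h1.trans h3) (by positivity)
      _ = C * (m+1).factorial / κ := by
          field_simp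
          ring
  · have : Tendsto (fun κ : ℝ => C * (m+1).factorial / κ) atTop (nhds 0) :=
      tendsto_const_nhds.div_atTop tendsto_id
    exact this

/-- Asymptotics (3.27) of the invariant integral `𝓘(κ)` as `κ → +∞`:
`κ^{n₁+1} 𝓘(κ) → n₁! (-s_*)^{n_r} (-(2n₁+2)) ∏ σᵢ^{nᵢ}`, so for large `κ` the sign of
`𝓘(κ)` is that of `(-1)^{n_r+1} ∏ σᵢ^{nᵢ}`. -/
theorem stmt_4 (r : ℕ) (hr : 3 ≤ r) (n : ℕ → ℕ) (σ : ℕ → ℝ)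
    (hσ : ∀ i ∈ Finset.Icc 2 (r - 1), σ i ≠ 0)
    (sstar : ℝ) (hsstar : sstar = 2 * ((n 1 : ℝ) + (n r : ℝ) + 2))
    (I : ℝ → ℝ)
    (hI : ∀ κ, I κ = ∫ y in (0:ℝ)..sstar,
        Real.exp (-κ * y) * y ^ n 1 * (y - sstar) ^ n r * (y - 2 * (n 1 : ℝ) - 2) *
          ∏ i ∈ Finset.Icc 2 (r - 1), (y + σ i) ^ n i) :
    Filter.Tendsto (fun κ : ℝ => κ ^ (n 1 + 1) * I κ) Filter.atTop
      (nhds ((Nat.factorial (n 1) : ℝ) * (-sstar) ^ n r * (-(2 * (n 1 : ℝ) + 2)) *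
        ∏ i ∈ Finset.Icc 2 (r - 1), σ i ^ n i)) ∧
    ∀ᶠ κ : ℝ in Filter.atTop,
      Real.sign (I κ) =
        Real.sign ((-1) ^ (n r + 1) * ∏ i ∈ Finset.Icc 2 (r - 1), σ i ^ n i) := by
  have hs : 0 < sstar := by rw [hsstar]; positivity
  set g : ℝ → ℝ := fun y =>
    (y - sstar) ^ n r * (y - 2 * (n 1 : ℝ) - 2) * ∏ i ∈ Finset.Icc 2 (r - 1), (y + σ i) ^ n i
    with hg_def
  have hg : ContDiff ℝ 1 g := by
    apply ContDiff.mul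
    · apply ContDiff.mul
      · exact (contDiff_id.sub contDiff_const).pow _
      · exact (contDiff_id.sub contDiff_const).sub contDiff_const
    · exact contDiff_prod fun i _ => (contDiff_id.add contDiff_const).pow _
  have hI' : ∀ κ, I κ = ∫ y in (0:ℝ)..sstar, Real.exp (-κ * y) * y ^ n 1 * g y := by
    intro κ
    rw [hI κ]
    congr 1
    ext y
    rw [hg_def]
    ring
  have hg0 : g 0 = (-sstar) ^ n r * (-(2 * (n 1 : ℝ) + 2)) *
      ∏ i ∈ Finset.Icc 2 (r - 1), σ i ^ n i := by
    rw [hg_def]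
    simp only [zero_sub, zero_add]
    ring
  -- split the integral
  have hsplit : ∀ κ : ℝ, κ ^ (n 1 + 1) * I κ =
      g 0 * (κ ^ (n 1 + 1) * ∫ y in (0:ℝ)..sstar, Real.exp (-κ * y) * y ^ n 1) +
      κ ^ (n 1 + 1) * ∫ y in (0:ℝ)..sstar, Real.exp (-κ * y) * y ^ n 1 * (g y - g 0) := by
    intro κ
    have h1 : IntervalIntegrable (fun y => Real.exp (-κ * y) * y ^ n 1 * g 0)
        MeasureTheory.volume 0 sstar := by
      apply Continuous.intervalIntegrable; fun_prop
    have h2 : IntervalIntegrable (fun y => Real.exp (-κ * y) * y ^ n 1 * (g y - g 0))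
        MeasureTheory.volume 0 sstar := by
      apply Continuous.intervalIntegrable
      have := hg.continuous
      fun_prop
    rw [hI' κ]
    rw [show (fun y => Real.exp (-κ * y) * y ^ n 1 * g y)
        = (fun y => Real.exp (-κ * y) * y ^ n 1 * g 0
            + Real.exp (-κ * y) * y ^ n 1 * (g y - g 0)) by ext y; ring]
    rw [intervalIntegral.integral_add h1 h2, intervalIntegral.integral_mul_const]
    ring
  have hlim : Filter.Tendsto (fun κ : ℝ => κ ^ (n 1 + 1) * I κ) Filter.atTop
      (nhds ((Nat.factorial (n 1) : ℝ) * (-sstar) ^ n r * (-(2 * (n 1 : ℝ) + 2)) *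
        ∏ i ∈ Finset.Icc 2 (r - 1), σ i ^ n i)) := by
    have hmain := (aux_tendsto (n 1) sstar hs).const_mul (g 0)
    have herr := aux_err (n 1) sstar hs g hg
    have := hmain.add herr
    rw [add_zero] at this
    have heq : g 0 * (Nat.factorial (n 1) : ℝ) =
        (Nat.factorial (n 1) : ℝ) * (-sstar) ^ n r * (-(2 * (n 1 : ℝ) + 2)) *
          ∏ i ∈ Finset.Icc 2 (r - 1), σ i ^ n i := by
      rw [hg0]; ring
    rw [heq] at this
    exact this.congr (fun κ => (hsplit κ).symm)
  refine ⟨hlim, ?_⟩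
  -- sign statement
  set P : ℝ := ∏ i ∈ Finset.Icc 2 (r - 1), σ i ^ n i with hP
  have hPne : P ≠ 0 := by
    rw [hP]
    exact Finset.prod_ne_zero_iff.mpr fun i hi => pow_ne_zero _ (hσ i hi)
  set T : ℝ := (-1) ^ (n r + 1) * P with hT
  set L : ℝ := (Nat.factorial (n 1) : ℝ) * (-sstar) ^ n r * (-(2 * (n 1 : ℝ) + 2)) * P with hL
  set c : ℝ := (Nat.factorial (n 1) : ℝ) * sstar ^ n r * (2 * (n 1 : ℝ) + 2) with hc
  have hcpos : 0 < c := by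
    rw [hc]
    have h0 : (0:ℝ) < Nat.factorial (n 1) := by positivity
    positivity
  have hLcT : L = c * T := by
    rw [hL, hc, hT, neg_pow, pow_succ]
    ring
  have hTne : T ≠ 0 := by
    rw [hT]
    exact mul_ne_zero (pow_ne_zero _ (by norm_num)) hPne
  rcases hTne.lt_or_gt with hTlt | hTgt
  · have hLneg : L < 0 := by rw [hLcT]; exact mul_neg_of_pos_of_neg hcpos hTlt
    filter_upwards [hlim.eventually_lt_const hLneg, Filter.eventually_gt_atTop (0:ℝ)]
      with κ h1 h2
    have hp : 0 < κ ^ (n 1 + 1) := pow_pos h2 _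
    have hIneg : I κ < 0 := by
      by_contra hcon
      push_neg at hcon
      exact absurd h1 (not_lt.mpr (mul_nonneg hp.le hcon))
    rw [Real.sign_of_neg hIneg, Real.sign_of_neg hTlt]
  · have hLpos : 0 < L := by rw [hLcT]; exact mul_pos hcpos hTgt
    filter_upwards [hlim.eventually_const_lt hLpos, Filter.eventually_gt_atTop (0:ℝ)]
      with κ h1 h2
    have hp : 0 < κ ^ (n 1 + 1) := pow_pos h2 _
    have hIpos : 0 < I κ := by
      by_contra hcon
      push_neg at hcon
      exact absurd h1 (not_lt.mpr (mul_nonpos_of_nonneg_of_nonpos hp.le hcon))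
    rw [Real.sign_of_pos hIpos, Real.sign_of_pos hTgt]
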